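/- Suppose Assumption A1 holds and the UV-decomposition is used. Let U' := {w ∈ ℝⁿ : df(x̄)(−w) = −df(x̄)(w)}, where df(x̄) is the subderivative of f at x̄. Then: (i) for every g° ∈ ε-ri ∂f(x̄), the set {w ∈ ℝⁿ : ⟨g − g°, w⟩ = 0 for all g ∈ ∂f(x̄)} equals the normal cone N_{∂f(x̄)}(g°) of the convex set ∂f(x̄) at g°, and N_{∂f(x̄)}(g°₁) = N_{∂f(x̄)}(g°₂) for any g°₁, g°₂ ∈ ε-ri ∂f(x̄); (ii) U = U' = N_{∂f(x̄)}(g°). -/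

import Mathlib

open Set Filter Topology
open scoped RealInnerProductSpace

noncomputable section

variable {F : Type*} [NormedAddCommGroup F] [InnerProductSpace ℝ F]

/-- The Fréchet (regular) normal cone to a set `C` at `x`. -/
def frechetNormalCone (C : Set F) (x : F) : Set F :=
  {v | ∀ δ > (0:ℝ), ∃ r > (0:ℝ), ∀ x' ∈ C, ‖x' - x‖ < r → ⟪v, x' - x⟫ ≤ δ * ‖x' - x‖}

/-- The limiting (Mordukhovich) normal cone to a set `C` at `x`. -/
def limitingNormalCone (C : Set F) (x : F) : Set F :=
  {v | ∃ xs : ℕ → F, ∃ vs : ℕ → F, (∀ k, xs k ∈ C) ∧ Tendsto xs atTop (𝓝 x) ∧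
    (∀ k, vs k ∈ frechetNormalCone C (xs k)) ∧ Tendsto vs atTop (𝓝 v)}

/-- `C` is locally closed at `x`. -/
def LocallyClosedAt (C : Set F) (x : F) : Prop := ∃ U ∈ 𝓝 x, IsClosed (C ∩ U)

/-- Prox-regularity of the set `C` at `xb` for the normal vector `wb`,
with respect to `ε` and `ρ`. -/
def ProxRegularSetAt (C : Set F) (xb wb : F) (ε ρ : ℝ) : Prop :=
  0 < ε ∧ 0 ≤ ρ ∧ LocallyClosedAt C xb ∧ xb ∈ C ∧ wb ∈ limitingNormalCone C xb ∧
    ∀ x w : F, ‖x - xb‖ < ε → w ∈ limitingNormalCone C x → ‖w - wb‖ < ε →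
      ∀ x' ∈ C, ‖x' - xb‖ ≤ ε → ⟪w, x' - x⟫ ≤ ρ / 2 * ‖x' - x‖ ^ 2

/-- Clarke regularity of a set at a point: the set is locally closed there and every
limiting normal is a Fréchet (regular) normal. -/
def ClarkeRegularSetAt (C : Set F) (x : F) : Prop :=
  LocallyClosedAt C x ∧ limitingNormalCone C x ⊆ frechetNormalCone C x

/-- The Fréchet subdifferential of `f : F → ℝ ∪ {±∞}` at `x`. -/
def frechetSubdiff (f : F → EReal) (x : F) : Set F :=
  {v | ∃ a : ℝ, f x = (a : EReal) ∧ ∀ δ > (0:ℝ), ∃ r > (0:ℝ), ∀ x' : F, ‖x' - x‖ < r →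
    ((a + ⟪v, x' - x⟫ - δ * ‖x' - x‖ : ℝ) : EReal) ≤ f x'}

/-- The limiting subdifferential of `f` at `x` (with `f`-attentive convergence). -/
def limSubdiff (f : F → EReal) (x : F) : Set F :=
  {v | ∃ xs : ℕ → F, ∃ vs : ℕ → F, Tendsto xs atTop (𝓝 x) ∧
    Tendsto (fun k => f (xs k)) atTop (𝓝 (f x)) ∧
    (∀ k, vs k ∈ frechetSubdiff f (xs k)) ∧ Tendsto vs atTop (𝓝 v)}

/-- The epigraph of `f`, viewed inside the `L²`-product `F ×₂ ℝ`. -/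
def epiSet (f : F → EReal) : Set (WithLp 2 (F × ℝ)) :=
  {p | f (WithLp.equiv 2 (F × ℝ) p).1 ≤ ((WithLp.equiv 2 (F × ℝ) p).2 : EReal)}

/-- Prox-regularity of the function `f` at `xb` for the subgradient `vb`, with respect
to `ε` and `ρ`. -/
def ProxRegularFnAt (f : F → EReal) (xb vb : F) (ε ρ : ℝ) : Prop :=
  0 < ε ∧ 0 ≤ ρ ∧ vb ∈ limSubdiff f xb ∧
  ∃ a : ℝ, f xb = (a : EReal) ∧ (∃ U ∈ 𝓝 xb, ∀ x ∈ U, LowerSemicontinuousAt f x) ∧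
    ∀ (x x' v : F) (b : ℝ), f x = (b : EReal) → |b - a| < ε → ‖x - xb‖ < ε →
      v ∈ limSubdiff f x → ‖v - vb‖ < ε → ‖x' - xb‖ ≤ ε →
      ((b + ⟪v, x' - x⟫ - ρ / 2 * ‖x' - x‖ ^ 2 : ℝ) : EReal) ≤ f x'

/-- `f` is properly prox-regular at `xb` w.r.t. `ε`, `ρ`: it is prox-regular there for every
limiting subgradient, and its epigraph is prox-regular at `(xb, f xb)` for every normal of
the form `(g, -1)`. -/
def ProperlyProxRegularAt (f : F → EReal) (xb : F) (ε ρ : ℝ) : Prop :=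
  (∀ g ∈ limSubdiff f xb, ProxRegularFnAt f xb g ε ρ) ∧
  ∃ a : ℝ, f xb = (a : EReal) ∧
    ∀ g : F, (WithLp.equiv 2 (F × ℝ)).symm (g, -1) ∈
        limitingNormalCone (epiSet f) ((WithLp.equiv 2 (F × ℝ)).symm (xb, a)) →
      ProxRegularSetAt (epiSet f) ((WithLp.equiv 2 (F × ℝ)).symm (xb, a))
        ((WithLp.equiv 2 (F × ℝ)).symm (g, -1)) ε ρ

/-- Assumption A1: `f` is proper, lower semicontinuous on the whole space, and properly
prox-regular at `xb` with respect to `eb` and `ρ`. -/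
def AssumptionA1 (f : F → EReal) (xb : F) (eb ρ : ℝ) : Prop :=
  (∀ x, f x ≠ ⊥) ∧ (∃ x, f x ≠ ⊤) ∧ LowerSemicontinuous f ∧ ProperlyProxRegularAt f xb eb ρ

/-- `D_ε f`: the set of `g` such that `g + int B_V(0, ε) ⊆ ∂f(xb)`
(the `ε`-relative interior of `∂f(xb)` when the UV-decomposition is used). -/
def DEps (f : F → EReal) (xb : F) (V : Submodule ℝ F) (ε : ℝ) : Set F :=
  {g | ∀ w ∈ V, ‖w‖ < ε → g + w ∈ limSubdiff f xb}

/-- Orthogonal projection onto a submodule, as a map into the ambient space. -/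
def projV (V : Submodule ℝ F) [V.HasOrthogonalProjection] (x : F) : F :=
  (V.orthogonalProjectionOnto x : F)

/-- The U-Lagrangian `L_ε(u; gb_v)`. -/
def ULagrangian (f : F → EReal) (xb gb : F) (V : Submodule ℝ F) [V.HasOrthogonalProjection]
    (ε : ℝ) (u : ↥(Vᗮ)) : EReal :=
  sInf ((fun v : F => f (xb + ↑u + v) - ((⟪projV V gb, v⟫ : ℝ) : EReal)) ''
    {v : F | v ∈ V ∧ ‖v‖ ≤ ε})

/-- The set `W(u; gb_v)` of minimizers defining the U-Lagrangian (with the convention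
that the argmin is empty when the infimum is `+∞`). -/
def Wset (f : F → EReal) (xb gb : F) (V : Submodule ℝ F) [V.HasOrthogonalProjection]
    (ε : ℝ) (u : ↥(Vᗮ)) : Set ↥V :=
  {v : ↥V | ‖(v : F)‖ ≤ ε ∧
    f (xb + ↑u + ↑v) - ((⟪projV V gb, (v:F)⟫ : ℝ) : EReal) = ULagrangian f xb gb V ε u ∧
    ULagrangian f xb gb V ε u ≠ ⊤}

/-- The function `h(u,v) = f(xb+u+v) - ⟪gb_v, v⟫ + δ_{B_V(0,ε)}(v)` on `U ×₂ V`. -/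
def hFun (f : F → EReal) (xb gb : F) (V : Submodule ℝ F) [V.HasOrthogonalProjection] (ε : ℝ)
    (p : WithLp 2 (↥(Vᗮ) × ↥V)) : EReal :=
  f (xb + ↑(WithLp.equiv 2 (↥(Vᗮ) × ↥V) p).1 + ↑(WithLp.equiv 2 (↥(Vᗮ) × ↥V) p).2)
    - ((⟪projV V gb, ((WithLp.equiv 2 (↥(Vᗮ) × ↥V) p).2 : F)⟫ : ℝ) : EReal)
    + (if ‖((WithLp.equiv 2 (↥(Vᗮ) × ↥V) p).2 : F)‖ ≤ ε then (0 : EReal) else ⊤)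

/-- `g` is a proximal subgradient of `φ` at `xb`. -/
def IsProximalSubgradient (φ : F → EReal) (xb g : F) : Prop :=
  ∃ a : ℝ, φ xb = (a : EReal) ∧ ∃ ε > (0:ℝ), ∃ ρ > (0:ℝ), ∀ x : F, ‖x - xb‖ ≤ ε →
    ((a + ⟪g, x - xb⟫ - ρ / 2 * ‖x - xb‖ ^ 2 : ℝ) : EReal) ≤ φ x

/-- The localized tilted argmin mapping used in the definition of tilt stability. -/
def tiltArgmin (φ : F → EReal) (xb : F) (a δ : ℝ) (g : F) : Set F :=
  {x | ‖x - xb‖ ≤ δ ∧ ∀ y : F, ‖y - xb‖ ≤ δ →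
    φ x - ((a + ⟪g, x - xb⟫ : ℝ) : EReal) ≤ φ y - ((a + ⟪g, y - xb⟫ : ℝ) : EReal)}

/-- `xb` gives a tilt-stable local minimum of `φ`. -/
def TiltStableLocalMin (φ : F → EReal) (xb : F) : Prop :=
  ∃ a : ℝ, φ xb = (a : EReal) ∧ ∃ δ > (0:ℝ), ∃ M : F → F, ∃ η > (0:ℝ), ∃ L : ℝ,
    M 0 = xb ∧ (∀ g g' : F, ‖g‖ < η → ‖g'‖ < η → ‖M g - M g'‖ ≤ L * ‖g - g'‖) ∧
    ∀ g : F, ‖g‖ < η → tiltArgmin φ xb a δ g = {M g}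

/-- Strict differentiability (with gradient vector `A`) of an extended-real-valued
function at `xb`. -/
def StrictDiffAt (φ : F → EReal) (xb A : F) : Prop :=
  (∃ a : ℝ, φ xb = (a : EReal)) ∧ ∀ δ > (0:ℝ), ∃ r > (0:ℝ), ∀ x x' : F,
    ‖x - xb‖ < r → ‖x' - xb‖ < r →
    ∃ a b : ℝ, φ x = (a : EReal) ∧ φ x' = (b : EReal) ∧
      |b - a - ⟪A, x' - x⟫| ≤ δ * ‖x' - x‖

/-- `φ` is subdifferentially continuous at `xb` (for every subgradient there). -/
def SubdiffContinuousAt (φ : F → EReal) (xb : F) : Prop :=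
  ∀ vb ∈ limSubdiff φ xb, ∀ xs : ℕ → F, ∀ vs : ℕ → F, Tendsto xs atTop (𝓝 xb) →
    (∀ k, vs k ∈ limSubdiff φ (xs k)) → Tendsto vs atTop (𝓝 vb) →
    Tendsto (fun k => φ (xs k)) atTop (𝓝 (φ xb))

/-- Strong metric regularity of the subdifferential map `∂φ` at `(xb, yb)`: the inverse
admits a Lipschitz single-valued localization around `(yb, xb)`. -/
def StronglyMetricallyRegularSubdiffAt (φ : F → EReal) (xb yb : F) : Prop :=
  yb ∈ limSubdiff φ xb ∧ ∃ a > (0:ℝ), ∃ b > (0:ℝ), ∃ L : ℝ, ∃ s : F → F,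
    (∀ g g' : F, ‖g - yb‖ < a → ‖g' - yb‖ < a → ‖s g - s g'‖ ≤ L * ‖g - g'‖) ∧
    ∀ g : F, ‖g - yb‖ < a → ‖s g - xb‖ < b ∧
      ∀ x : F, ‖x - xb‖ < b → (g ∈ limSubdiff φ x ↔ x = s g)

/-- `f` is subdifferentially regular at `x`: `f x` is finite and the epigraph is Clarke
regular at `(x, f x)`. -/
def SubdiffRegularAt (f : F → EReal) (x : F) : Prop :=
  ∃ a : ℝ, f x = (a : EReal) ∧
    ClarkeRegularSetAt (epiSet f) ((WithLp.equiv 2 (F × ℝ)).symm (x, a))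

/-- `M` is (around `yb`) a `C^k`-smooth manifold: locally the common zero set of finitely
many `C^k` functions with linearly independent gradients at `yb`. -/
def IsManifoldAround [CompleteSpace F] (M : Set F) (yb : F) (k : WithTop ℕ∞) : Prop :=
  ∃ m : ℕ, ∃ Q : Set F, ∃ φ : Fin m → F → ℝ, IsOpen Q ∧ yb ∈ Q ∧
    (∀ i, ContDiff ℝ k (φ i)) ∧ (M ∩ Q = {y ∈ Q | ∀ i, φ i y = 0}) ∧
    LinearIndependent ℝ fun i => gradient (φ i) yb

/-- Continuity (inner- and outer-semicontinuity) of `∂f` at `xb` relative to `M`. -/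
def SubdiffContinuousRelAt (f : F → EReal) (M : Set F) (xb : F) : Prop :=
  (∀ g ∈ limSubdiff f xb, ∀ xs : ℕ → F, (∀ k, xs k ∈ M) → Tendsto xs atTop (𝓝 xb) →
      ∃ gs : ℕ → F, (∀ k, gs k ∈ limSubdiff f (xs k)) ∧ Tendsto gs atTop (𝓝 g)) ∧
  (∀ g : F, ∀ xs : ℕ → F, ∀ gs : ℕ → F, (∀ k, xs k ∈ M) → Tendsto xs atTop (𝓝 xb) →
      (∀ k, gs k ∈ limSubdiff f (xs k)) → Tendsto gs atTop (𝓝 g) → g ∈ limSubdiff f xb)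

/-- `f` is `C^k`-partly smooth at `xb` relative to `M`, with `V`-space `V`. -/
def PartlySmoothAt [CompleteSpace F] (f : F → EReal) (xb : F) (M : Set F)
    (V : Submodule ℝ F) (k : WithTop ℕ∞) : Prop :=
  IsManifoldAround M xb k ∧ xb ∈ M ∧
  (∃ N : Set F, IsOpen N ∧ xb ∈ N ∧ ∃ g : F → ℝ, ContDiff ℝ k g ∧
      ∀ y ∈ M ∩ N, f y = ((g y : ℝ) : EReal)) ∧
  (∃ δ > (0:ℝ), ∀ y ∈ M, ‖y - xb‖ < δ → SubdiffRegularAt f y ∧ (limSubdiff f y).Nonempty) ∧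
  limitingNormalCone M xb = (V : Set F) ∧
  SubdiffContinuousRelAt f M xb

/-- The subderivative `df(xb)(w)`. -/
def subderiv (f : F → EReal) (xb : F) (w : F) : EReal :=
  liminf (fun p : ℝ × F => (((p.1)⁻¹ : ℝ) : EReal) * (f (xb + p.1 • p.2) - f xb))
    ((𝓝[>] (0:ℝ)) ×ˢ 𝓝 w)

/-- The normal cone to a convex set `C` at `x` in the sense of convex analysis. -/
def convexNormalCone (C : Set F) (x : F) : Set F :=
  {w | ∀ y ∈ C, ⟪w, y - x⟫ ≤ 0}


section AuxProofs

variable {n : ℕ}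

private lemma aux_bound {f : EuclideanSpace ℝ (Fin n) → EReal}
    {xb gt : EuclideanSpace ℝ (Fin n)} {eb ρ : ℝ}
    (hA1 : AssumptionA1 f xb eb ρ) (hgt : gt ∈ limSubdiff f xb) :
    ∃ a : ℝ, f xb = (a : EReal) ∧ 0 < eb ∧ 0 ≤ ρ ∧
      ∀ g ∈ limSubdiff f xb, ∀ x' : EuclideanSpace ℝ (Fin n), ‖x' - xb‖ ≤ eb →
        ((a + ⟪g, x' - xb⟫ - ρ / 2 * ‖x' - xb‖ ^ 2 : ℝ) : EReal) ≤ f x' := by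
  obtain ⟨_, _, _, hpr, _⟩ := hA1
  obtain ⟨heb, hρ, _, a, ha, _, _⟩ := hpr gt hgt
  refine ⟨a, ha, heb, hρ, ?_⟩
  intro g hg x' hx'
  obtain ⟨_, _, _, a', ha', _, hineq⟩ := hpr g hg
  have haa : a' = a := by
    rw [ha] at ha'
    exact_mod_cast ha'.symm
  subst haa
  have h0 : |a' - a'| < eb := by simpa using heb
  have h1 : ‖xb - xb‖ < eb := by simpa using heb
  have h2 : ‖g - g‖ < eb := by simpa using heb
  simpa using hineq xb x' g a' ha' h0 h1 hg h2 hx'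

private lemma aux_quot {f : EuclideanSpace ℝ (Fin n) → EReal}
    {xb g : EuclideanSpace ℝ (Fin n)} {eb ρ a : ℝ}
    (ha : f xb = (a : EReal)) (hbot : ∀ x, f x ≠ ⊥)
    (hAg : ∀ x' : EuclideanSpace ℝ (Fin n), ‖x' - xb‖ ≤ eb →
      ((a + ⟪g, x' - xb⟫ - ρ / 2 * ‖x' - xb‖ ^ 2 : ℝ) : EReal) ≤ f x')
    {t : ℝ} (ht : 0 < t) {w' : EuclideanSpace ℝ (Fin n)} (hw' : ‖t • w'‖ ≤ eb) :
    ((⟪g, w'⟫ - ρ * t / 2 * ‖w'‖ ^ 2 : ℝ) : EReal)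
      ≤ ((t⁻¹ : ℝ) : EReal) * (f (xb + t • w') - f xb) := by
  have hb := hAg (xb + t • w') (by simpa using hw')
  rw [ha]
  by_cases htop : f (xb + t • w') = ⊤
  · rw [htop, EReal.top_sub_coe, EReal.coe_mul_top_of_pos (inv_pos.2 ht)]
    exact le_top
  obtain ⟨b, hfv⟩ : ∃ b : ℝ, f (xb + t • w') = (b : EReal) :=
    ⟨(f (xb + t • w')).toReal, (EReal.coe_toReal htop (hbot _)).symm⟩
  rw [hfv] at hb ⊢
  have hb' : a + ⟪g, t • w'⟫ - ρ / 2 * ‖t • w'‖ ^ 2 ≤ b := by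
    have heq : xb + t • w' - xb = t • w' := by abel
    rw [heq] at hb
    exact_mod_cast hb
  rw [← EReal.coe_sub, ← EReal.coe_mul, EReal.coe_le_coe_iff]
  have hin : ⟪g, t • w'⟫ = t * ⟪g, w'⟫ := real_inner_smul_right g w' t
  have hnr : ‖t • w'‖ = t * ‖w'‖ := by
    rw [norm_smul, Real.norm_eq_abs, abs_of_pos ht]
  have h2 : t * (⟪g, w'⟫ - ρ * t / 2 * ‖w'‖ ^ 2) ≤ b - a := by
    rw [hin, hnr] at hb'
    nlinarith [hb']
  calc ⟪g, w'⟫ - ρ * t / 2 * ‖w'‖ ^ 2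
      = t⁻¹ * (t * (⟪g, w'⟫ - ρ * t / 2 * ‖w'‖ ^ 2)) := by
        field_simp
    _ ≤ t⁻¹ * (b - a) := by
        exact mul_le_mul_of_nonneg_left h2 (inv_pos.2 ht).le

private lemma aux_B {f : EuclideanSpace ℝ (Fin n) → EReal}
    {xb g : EuclideanSpace ℝ (Fin n)} {eb ρ a : ℝ}
    (ha : f xb = (a : EReal)) (hbot : ∀ x, f x ≠ ⊥) (heb : 0 < eb) (hρ : 0 ≤ ρ)
    (hAg : ∀ x' : EuclideanSpace ℝ (Fin n), ‖x' - xb‖ ≤ eb →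
      ((a + ⟪g, x' - xb⟫ - ρ / 2 * ‖x' - xb‖ ^ 2 : ℝ) : EReal) ≤ f x')
    (w : EuclideanSpace ℝ (Fin n)) :
    ((⟪g, w⟫ : ℝ) : EReal) ≤ subderiv f xb w := by
  by_contra hc
  obtain ⟨r, hr1, hr2⟩ := EReal.lt_iff_exists_real_btwn.mp (not_le.mp hc)
  have hr2' : r < ⟪g, w⟫ := by exact_mod_cast hr2
  set s : ℝ := ⟪g, w⟫ - r with hs_def
  have hs : 0 < s := by simp only [hs_def]; linarith
  set δ₂ : ℝ := min 1 (s / (3 * (‖g‖ + 1))) with hδ₂_def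
  set δ₁ : ℝ := min ((2 * s / 3) / (ρ * (‖w‖ + 1) ^ 2 + 1)) (eb / (‖w‖ + 1)) with hδ₁_def
  have hδ₂ : 0 < δ₂ := by
    apply lt_min one_pos
    positivity
  have hδ₁ : 0 < δ₁ := by
    apply lt_min
    · positivity
    · positivity
  have hev : ∀ᶠ p in (𝓝[>] (0:ℝ)) ×ˢ 𝓝 w,
      (r : EReal) ≤ (((p.1)⁻¹ : ℝ) : EReal) * (f (xb + p.1 • p.2) - f xb) := by
    have hmem : Ioo (0:ℝ) δ₁ ×ˢ Metric.ball w δ₂ ∈ (𝓝[>] (0:ℝ)) ×ˢ 𝓝 w :=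
      prod_mem_prod (Ioo_mem_nhdsGT_of_mem ⟨le_refl 0, hδ₁⟩) (Metric.ball_mem_nhds _ hδ₂)
    filter_upwards [hmem] with p hp
    obtain ⟨⟨hp1, hp2⟩, hp3⟩ := hp
    have hwn : ‖p.2 - w‖ < δ₂ := by
      rw [← dist_eq_norm]
      exact Metric.mem_ball.mp hp3
    have hw'n : ‖p.2‖ ≤ ‖w‖ + 1 := by
      calc ‖p.2‖ ≤ ‖w‖ + ‖p.2 - w‖ := by
            have := norm_add_le w (p.2 - w)
            simpa using this
        _ ≤ ‖w‖ + 1 := by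
            have : δ₂ ≤ 1 := min_le_left _ _
            linarith
    have hsm : ‖p.1 • p.2‖ ≤ eb := by
      rw [norm_smul, Real.norm_eq_abs, abs_of_pos hp1]
      have h1 : p.1 ≤ eb / (‖w‖ + 1) := le_trans hp2.le (min_le_right _ _)
      have hw1 : (0:ℝ) < ‖w‖ + 1 := by positivity
      calc p.1 * ‖p.2‖ ≤ (eb / (‖w‖ + 1)) * (‖w‖ + 1) := by
            apply mul_le_mul h1 hw'n (norm_nonneg _)
            positivity
        _ = eb := by field_simp
    refine le_trans ?_ (aux_quot ha hbot hAg hp1 hsm)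
    rw [EReal.coe_le_coe_iff]
    have hginner : ⟪g, w⟫ - ‖g‖ * δ₂ ≤ ⟪g, p.2⟫ := by
      have h1 : ⟪g, p.2⟫ = ⟪g, w⟫ + ⟪g, p.2 - w⟫ := by
        rw [← inner_add_right]
        congr 1
        abel
      have h2 : |⟪g, p.2 - w⟫| ≤ ‖g‖ * ‖p.2 - w‖ := abs_real_inner_le_norm g _
      have h3 : ‖g‖ * ‖p.2 - w‖ ≤ ‖g‖ * δ₂ := by
        apply mul_le_mul_of_nonneg_left hwn.le (norm_nonneg _)
      rw [h1]
      have := abs_le.mp h2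
      linarith
    have hg2 : ‖g‖ * δ₂ ≤ s / 3 := by
      have h1 : δ₂ ≤ s / (3 * (‖g‖ + 1)) := min_le_right _ _
      have h2 : ‖g‖ * δ₂ ≤ ‖g‖ * (s / (3 * (‖g‖ + 1))) :=
        mul_le_mul_of_nonneg_left h1 (norm_nonneg _)
      have h3 : ‖g‖ * (s / (3 * (‖g‖ + 1))) ≤ s / 3 := by
        rw [mul_comm, div_mul_eq_mul_div, div_le_div_iff₀ (by positivity) (by norm_num : (0:ℝ) < 3)]
        nlinarith [norm_nonneg g, hs.le]
      linarith
    have hq : ρ * p.1 / 2 * ‖p.2‖ ^ 2 ≤ s / 3 := by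
      have h1 : p.1 ≤ (2 * s / 3) / (ρ * (‖w‖ + 1) ^ 2 + 1) := le_trans hp2.le (min_le_left _ _)
      have h2 : ρ * p.1 / 2 * ‖p.2‖ ^ 2 ≤ ρ * p.1 / 2 * (‖w‖ + 1) ^ 2 := by
        apply mul_le_mul_of_nonneg_left _ (by positivity)
        apply pow_le_pow_left₀ (norm_nonneg _) hw'n
      have h3 : ρ * p.1 / 2 * (‖w‖ + 1) ^ 2 ≤ s / 3 := by
        have hd : (0:ℝ) < ρ * (‖w‖ + 1) ^ 2 + 1 := by positivity
        rw [le_div_iff₀ hd] at h1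
        nlinarith [sq_nonneg (‖w‖ + 1), hp1.le]
      linarith
    have : r = ⟪g, w⟫ - s := by simp [hs_def]
    nlinarith [hginner, hg2, hq]
  have hle : (r : EReal) ≤ subderiv f xb w := by
    simp only [subderiv]
    exact Filter.le_liminf_of_le (by isBoundedDefault) hev
  exact absurd hr1 (not_lt.mpr hle)


private lemma exists_min_ereal {φ : EuclideanSpace ℝ (Fin n) → EReal}
    {K : Set (EuclideanSpace ℝ (Fin n))}
    (hK : IsCompact K) (hlsc : LowerSemicontinuous φ)
    {y₀ : EuclideanSpace ℝ (Fin n)} (hy₀ : y₀ ∈ K) {c₀ L : ℝ}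
    (hc₀ : φ y₀ ≤ (c₀ : EReal)) (hL : ∀ z ∈ K, (L : EReal) ≤ φ z) :
    ∃ y ∈ K, ∀ z ∈ K, φ y ≤ φ z := by
  set m := sInf (φ '' K) with hm_def
  have hmle : m ≤ (c₀ : EReal) := le_trans (sInf_le ⟨y₀, hy₀, rfl⟩) hc₀
  have hmge : (L : EReal) ≤ m := le_sInf (by rintro _ ⟨z, hz, rfl⟩; exact hL z hz)
  have hmtop : m ≠ ⊤ := ne_top_of_le_ne_top (EReal.coe_ne_top c₀) hmle
  have hmbot : m ≠ ⊥ := by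
    intro h
    rw [h, le_bot_iff] at hmge
    exact EReal.coe_ne_bot L hmge
  set μ := m.toReal with hμ_def
  have hμ : m = (μ : EReal) := (EReal.coe_toReal hmtop hmbot).symm
  have hz : ∀ k : ℕ, ∃ z, z ∈ K ∧ φ z < ((μ + 1/(k+1) : ℝ) : EReal) := by
    intro k
    have hlt : m < ((μ + 1/(k+1) : ℝ) : EReal) := by
      rw [hμ, EReal.coe_lt_coe_iff]
      have : (0:ℝ) < 1/(k+1) := by positivity
      linarith
    obtain ⟨_, ⟨z, hzK, rfl⟩, hzlt⟩ := sInf_lt_iff.mp hlt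
    exact ⟨z, hzK, hzlt⟩
  choose z hzK hzlt using hz
  obtain ⟨yh, hyhK, σ, hσ, hconv⟩ := hK.tendsto_subseq hzK
  refine ⟨yh, hyhK, fun zz hzz => ?_⟩
  have hy : φ yh ≤ m := by
    by_contra hcon
    obtain ⟨c', hc1, hc2⟩ := EReal.lt_iff_exists_real_btwn.mp (not_le.mp hcon)
    have hμc : μ < c' := by
      rw [hμ] at hc1
      exact_mod_cast hc1
    have hev : ∀ᶠ x in 𝓝 yh, (c' : EReal) < φ x := hlsc yh (c' : EReal) hc2
    have hev2 := hconv.eventually hev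
    obtain ⟨k₁, hk₁⟩ : ∃ k₁:ℕ, (1:ℝ)/(k₁+1) < c' - μ := exists_nat_one_div_lt (by linarith)
    obtain ⟨k, hklt, hk_ge⟩ := (hev2.and (eventually_ge_atTop k₁)).exists
    have h1 : φ (z (σ k)) < ((μ + 1/(σ k+1) : ℝ) : EReal) := hzlt (σ k)
    have h2 : (1:ℝ)/(σ k + 1) ≤ 1/(k₁+1) := by
      apply one_div_le_one_div_of_le (by positivity)
      have : (k₁ : ℝ) ≤ (σ k : ℝ) := by
        exact_mod_cast le_trans hk_ge (hσ.le_apply)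
      linarith
    have h3 : ((μ + 1/(σ k+1) : ℝ) : EReal) ≤ ((c' : ℝ) : EReal) := by
      rw [EReal.coe_le_coe_iff]
      linarith
    exact absurd (lt_of_lt_of_le (lt_trans hklt h1) h3) (lt_irrefl _)
  exact hy.trans (sInf_le ⟨zz, hzz, rfl⟩)
private lemma aux_quad {D s : ℝ} (hD : 0 ≤ D) (hs : 0 ≤ s)
    (h : D^2 ≤ s^2 + (1/4)*(D+s)^2) : D ≤ 2*s := by
  nlinarith [sq_nonneg (D - 2*s), sq_nonneg (D + s), mul_nonneg hD hs]

set_option maxHeartbeats 1000000 in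
private lemma aux_step {f : EuclideanSpace ℝ (Fin n) → EReal}
    {xb g₀ : EuclideanSpace ℝ (Fin n)} {a eb ρ : ℝ}
    (hbot : ∀ x, f x ≠ ⊥) (hlsc : LowerSemicontinuous f) (ha : f xb = (a : EReal))
    (heb : 0 < eb) (hρ : 0 ≤ ρ)
    (hAg : ∀ x' : EuclideanSpace ℝ (Fin n), ‖x' - xb‖ ≤ eb →
      ((a + ⟪g₀, x' - xb⟫ - ρ / 2 * ‖x' - xb‖ ^ 2 : ℝ) : EReal) ≤ f x')
    (w : EuclideanSpace ℝ (Fin n)) {t κ : ℝ} (hκ : 1 ≤ κ) (ht0 : 0 < t)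
    (htk : 4 * κ * (ρ + 1) * t ≤ 1) (hteb : 3 * t * ‖w‖ < eb) :
    ∃ (y : EuclideanSpace ℝ (Fin n)) (b : ℝ), f y = (b : EReal) ∧ ‖y - xb - t • w‖ ≤ 2 * t * ‖w‖ ∧ ‖y - xb‖ ≤ 3 * t * ‖w‖ ∧
      b ≤ a + ⟪g₀, y - xb⟫ + t * ‖w‖ ^ 2 / (2 * κ) - ‖y - xb - t • w‖ ^ 2 / (2 * κ * t) ∧
      g₀ + (κ * t)⁻¹ • (t • w - (y - xb)) ∈ frechetSubdiff f y := by
  have hκ0 : (0:ℝ) < κ := lt_of_lt_of_le one_pos hκ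
  have hκt : 0 < κ * t := by positivity
  set ψ : EuclideanSpace ℝ (Fin n) → ℝ :=
    fun z => -a - ⟪g₀, z - xb⟫ + ‖z - xb - t • w‖ ^ 2 / (2 * κ * t) with hψ_def
  have hψcont : Continuous ψ := by
    apply Continuous.add
    · exact continuous_const.sub (continuous_const.inner (continuous_id.sub continuous_const))
    · exact (((continuous_id.sub continuous_const).sub continuous_const).norm.pow 2).div_const _
  set φ : EuclideanSpace ℝ (Fin n) → EReal := fun z => f z + ((ψ z : ℝ) : EReal) with hφ_def
  have hφlsc : LowerSemicontinuous φ := by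
    apply LowerSemicontinuous.add' hlsc
      ((continuous_coe_real_ereal.comp hψcont).lowerSemicontinuous)
    intro x
    exact EReal.continuousAt_add (Or.inr (EReal.coe_ne_bot _)) (Or.inl (hbot x))
  set K := Metric.closedBall xb eb with hK_def
  have hKc : IsCompact K := isCompact_closedBall xb eb
  have hxbK : xb ∈ K := Metric.mem_closedBall_self heb.le
  have htw : ‖t • w‖ = t * ‖w‖ := by
    rw [norm_smul, Real.norm_eq_abs, abs_of_pos ht0]
  have hψxb : ψ xb = -a + t * ‖w‖ ^ 2 / (2 * κ) := by
    have h1 : ψ xb = -a - ⟪g₀, xb - xb⟫ + ‖xb - xb - t • w‖ ^ 2 / (2 * κ * t) := rfl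
    rw [h1, show xb - xb - t • w = -(t • w) from by abel, norm_neg, htw, sub_self,
      inner_zero_right]
    field_simp
    ring
  have hφxb : φ xb = ((t * ‖w‖ ^ 2 / (2 * κ) : ℝ) : EReal) := by
    simp only [hφ_def, ha, hψxb, ← EReal.coe_add]
    norm_num
  have hLB : ∀ z ∈ K, ((-(ρ/2) * eb^2 : ℝ) : EReal) ≤ φ z := by
    intro z hz
    have hz' : ‖z - xb‖ ≤ eb := by rwa [Metric.mem_closedBall, dist_eq_norm] at hz
    have h1 := hAg z hz'
    have h2 : -(ρ/2) * eb^2 ≤ (a + ⟪g₀, z - xb⟫ - ρ / 2 * ‖z - xb‖ ^ 2) + ψ z := by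
      simp only [hψ_def]
      have h3 : ‖z - xb‖^2 ≤ eb^2 := pow_le_pow_left₀ (norm_nonneg _) hz' 2
      have h4 : (0:ℝ) ≤ ‖z - xb - t • w‖ ^ 2 / (2 * κ * t) := by positivity
      nlinarith
    calc ((-(ρ/2) * eb^2 : ℝ) : EReal)
        ≤ (((a + ⟪g₀, z - xb⟫ - ρ / 2 * ‖z - xb‖ ^ 2) + ψ z : ℝ) : EReal) := by
          exact_mod_cast h2
      _ = ((a + ⟪g₀, z - xb⟫ - ρ / 2 * ‖z - xb‖ ^ 2 : ℝ) : EReal) + ((ψ z : ℝ) : EReal) := by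
          rw [← EReal.coe_add]
      _ ≤ f z + ((ψ z : ℝ) : EReal) := add_le_add_left h1 _
  obtain ⟨y, hyK, hymin⟩ := exists_min_ereal hKc hφlsc hxbK (le_of_eq hφxb) hLB
  have hbud : φ y ≤ ((t * ‖w‖ ^ 2 / (2 * κ) : ℝ) : EReal) := by
    rw [← hφxb]; exact hymin xb hxbK
  have hfytop : f y ≠ ⊤ := by
    intro h
    rw [hφ_def] at hbud
    simp only [h, EReal.top_add_coe] at hbud
    exact absurd hbud (by simp)
  obtain ⟨b, hb⟩ : ∃ b:ℝ, f y = (b:EReal) := ⟨(f y).toReal, (EReal.coe_toReal hfytop (hbot y)).symm⟩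
  have hyball : ‖y - xb‖ ≤ eb := by rwa [Metric.mem_closedBall, dist_eq_norm] at hyK
  have hφyR : φ y = ((b + ψ y : ℝ) : EReal) := by
    simp only [hφ_def, hb, ← EReal.coe_add]
  have hbudR : b + ψ y ≤ t * ‖w‖ ^ 2 / (2 * κ) := by
    rw [hφyR] at hbud
    exact_mod_cast hbud
  have hlow : a + ⟪g₀, y - xb⟫ - ρ/2 * ‖y - xb‖^2 ≤ b := by
    have := hAg y hyball
    rw [hb] at this
    exact_mod_cast this
  have hψyval : ψ y = -a - ⟪g₀, y - xb⟫ + ‖y - xb - t • w‖ ^ 2 / (2 * κ * t) := rfl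
  have h02 : ‖y - xb‖ ≤ ‖y - xb - t • w‖ + t * ‖w‖ := by
    calc ‖y - xb‖ = ‖(y - xb - t • w) + t • w‖ := by congr 1; abel
      _ ≤ ‖y - xb - t • w‖ + ‖t • w‖ := norm_add_le _ _
      _ = ‖y - xb - t • w‖ + t * ‖w‖ := by rw [htw]
  have hDb : ‖y - xb - t • w‖ ≤ 2 * t * ‖w‖ := by
    have h01 : ‖y - xb - t • w‖^2 / (2*κ*t) ≤ t*‖w‖^2/(2*κ) + ρ/2*‖y - xb‖^2 := by
      rw [hψyval] at hbudR
      linarith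
    have h2κt : (0:ℝ) < 2*κ*t := by positivity
    have h01' : ‖y - xb - t • w‖^2 ≤ (t*‖w‖^2/(2*κ) + ρ/2*‖y - xb‖^2) * (2*κ*t) :=
      (div_le_iff₀ h2κt).mp h01
    have he1 : (t*‖w‖^2/(2*κ)) * (2*κ*t) = t^2*‖w‖^2 := by field_simp
    have he2 : (ρ/2*‖y - xb‖^2) * (2*κ*t) = κ*ρ*t*‖y - xb‖^2 := by ring
    have h03 : ‖y - xb - t • w‖^2 ≤ t^2*‖w‖^2 + κ*ρ*t*‖y - xb‖^2 := by nlinarith [h01']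
    have h4 : κ*ρ*t ≤ 1/4 := by nlinarith [ht0, hκ0, hρ]
    have h5 : ‖y - xb‖^2 ≤ (‖y - xb - t • w‖ + t*‖w‖)^2 :=
      pow_le_pow_left₀ (norm_nonneg _) h02 2
    have hn1 : κ*ρ*t*‖y - xb‖^2 ≤ (1/4) * (‖y - xb - t • w‖ + t*‖w‖)^2 := by
      apply mul_le_mul h4 h5 (sq_nonneg _) (by norm_num)
    have hs0 : (0:ℝ) ≤ t * ‖w‖ := by positivity
    have hts : (t*‖w‖)^2 = t^2*‖w‖^2 := by ring
    have hfin : ‖y - xb - t • w‖^2 ≤ (t*‖w‖)^2 + (1/4)*(‖y - xb - t • w‖ + t*‖w‖)^2 := by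
      linarith [h03, hn1]
    have := aux_quad (norm_nonneg (y - xb - t • w)) hs0 hfin
    linarith
  have hyb3 : ‖y - xb‖ ≤ 3*t*‖w‖ := by
    calc ‖y - xb‖ ≤ ‖y - xb - t • w‖ + t * ‖w‖ := h02
      _ ≤ 2*t*‖w‖ + t*‖w‖ := by linarith
      _ = 3*t*‖w‖ := by ring
  have hmain : b ≤ a + ⟪g₀, y - xb⟫ + t*‖w‖^2/(2*κ) - ‖y - xb - t • w‖^2/(2*κ*t) := by
    rw [hψyval] at hbudR
    linarith
  refine ⟨y, b, hb, hDb, hyb3, hmain, ⟨b, hb, ?_⟩⟩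
  intro δ hδ
  have hrpos : (0:ℝ) < min (2*κ*t*δ) (eb - 3*t*‖w‖) := lt_min (by positivity) (by linarith)
  refine ⟨_, hrpos, ?_⟩
  intro x' hx'
  have hx'1 : ‖x' - y‖ < 2*κ*t*δ := lt_of_lt_of_le hx' (min_le_left _ _)
  have hx'2 : ‖x' - y‖ < eb - 3*t*‖w‖ := lt_of_lt_of_le hx' (min_le_right _ _)
  have hx'K : x' ∈ K := by
    rw [Metric.mem_closedBall, dist_eq_norm]
    calc ‖x' - xb‖ = ‖(x' - y) + (y - xb)‖ := by congr 1; abel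
      _ ≤ ‖x' - y‖ + ‖y - xb‖ := norm_add_le _ _
      _ ≤ (eb - 3*t*‖w‖) + 3*t*‖w‖ := by linarith
      _ = eb := by ring
  have hminx' := hymin x' hx'K
  by_cases htop' : f x' = ⊤
  · rw [htop']; exact le_top
  obtain ⟨b', hb'⟩ : ∃ b':ℝ, f x' = (b':EReal) :=
    ⟨(f x').toReal, (EReal.coe_toReal htop' (hbot x')).symm⟩
  rw [hb']
  have hre : b + ψ y ≤ b' + ψ x' := by
    have h2 : φ x' = ((b' + ψ x' : ℝ) : EReal) := by
      simp only [hφ_def, hb', ← EReal.coe_add]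
    rw [hφyR, h2] at hminx'
    exact_mod_cast hminx'
  rw [EReal.coe_le_coe_iff]
  have hq' : x' - xb - t • w = (y - xb - t • w) + (x' - y) := by abel
  have hnorm : ‖x' - xb - t • w‖^2
      = ‖y - xb - t • w‖^2 + 2*⟪y - xb - t • w, x' - y⟫ + ‖x' - y‖^2 := by
    rw [hq']
    exact norm_add_sq_real _ _
  have hginner : ⟪g₀ + (κ*t)⁻¹ • (t • w - (y - xb)), x' - y⟫
      = ⟪g₀, x' - y⟫ - (κ*t)⁻¹ * ⟪y - xb - t • w, x' - y⟫ := by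
    rw [inner_add_left, real_inner_smul_left]
    have hneg : t • w - (y - xb) = -(y - xb - t • w) := by abel
    rw [hneg, inner_neg_left]
    ring
  have hi : ⟪g₀, x' - xb⟫ = ⟪g₀, y - xb⟫ + ⟪g₀, x' - y⟫ := by
    rw [← inner_add_right]
    congr 1
    abel
  have hid : ψ y - ψ x' = ⟪g₀, x' - y⟫ - (κ*t)⁻¹*⟪y - xb - t • w, x' - y⟫
      - ‖x' - y‖^2/(2*κ*t) := by
    simp only [hψ_def, hnorm, hi]
    field_simp
    ring
  have hpen : ‖x' - y‖^2/(2*κ*t) ≤ δ*‖x' - y‖ := by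
    rw [div_le_iff₀ (by positivity)]
    nlinarith [hx'1, norm_nonneg (x' - y), hκt, hδ]
  clear_value ψ φ K
  rw [hginner]
  linarith [hre, hid, hpen]
set_option maxHeartbeats 4000000 in
private lemma aux_key {f : EuclideanSpace ℝ (Fin n) → EReal}
    {xb gt g₀ : EuclideanSpace ℝ (Fin n)} {eb ρ ε a : ℝ}
    {V : Submodule ℝ (EuclideanSpace ℝ (Fin n))}
    (hbot : ∀ x, f x ≠ ⊥) (hlsc : LowerSemicontinuous f)
    (ha : f xb = (a : EReal)) (heb : 0 < eb) (hρ : 0 ≤ ρ) (hε : 0 < ε)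
    (hA : ∀ g ∈ limSubdiff f xb, ∀ x' : EuclideanSpace ℝ (Fin n), ‖x' - xb‖ ≤ eb →
      ((a + ⟪g, x' - xb⟫ - ρ / 2 * ‖x' - xb‖ ^ 2 : ℝ) : EReal) ≤ f x')
    (hV : V = Submodule.span ℝ ((fun g => g - gt) '' limSubdiff f xb))
    (hgt : gt ∈ limSubdiff f xb)
    (hg₀ : g₀ ∈ DEps f xb V ε)
    {w : EuclideanSpace ℝ (Fin n)} (hw : w ∈ Vᗮ) :
    subderiv f xb w ≤ ((⟪g₀, w⟫ : ℝ) : EReal) := by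
  have hg₀S : g₀ ∈ limSubdiff f xb := by
    have := hg₀ 0 V.zero_mem (by simpa using hε)
    simpa using this
  by_contra hcon
  replace hcon := not_le.mp hcon
  by_cases hw0 : w = 0
  · subst hw0
    have hfreq : ∃ᶠ p in (𝓝[>] (0:ℝ)) ×ˢ 𝓝 (0:EuclideanSpace ℝ (Fin n)),
        (((p.1)⁻¹ : ℝ) : EReal) * (f (xb + p.1 • p.2) - f xb)
          ≤ ((⟪g₀, (0:EuclideanSpace ℝ (Fin n))⟫ : ℝ) : EReal) := by
      rw [Filter.frequently_iff]
      intro U hU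
      rw [Filter.mem_prod_iff] at hU
      obtain ⟨A, hA', B, hB, hAB⟩ := hU
      obtain ⟨t, htA⟩ := Filter.nonempty_of_mem hA'
      refine ⟨(t, 0), hAB (Set.mk_mem_prod htA (mem_of_mem_nhds hB)), ?_⟩
      have h1 : xb + t • (0:EuclideanSpace ℝ (Fin n)) = xb := by simp
      rw [h1, ha, ← EReal.coe_sub, sub_self, inner_zero_right]
      simp
    have hle : subderiv f xb 0 ≤ ((⟪g₀, (0:EuclideanSpace ℝ (Fin n))⟫ : ℝ) : EReal) := by
      simp only [subderiv]
      exact Filter.liminf_le_of_frequently_le' hfreq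
    exact absurd hcon (not_lt.mpr hle)
  obtain ⟨c, hc_def⟩ : ∃ c : ℝ, c = ⟪g₀, w⟫ := ⟨_, rfl⟩
  rw [← hc_def] at hcon
  obtain ⟨c₂, hc1, hc2⟩ := EReal.lt_iff_exists_real_btwn.mp hcon
  have hccc : c < c₂ := by exact_mod_cast hc1
  obtain ⟨η, hη, hc₂⟩ : ∃ η : ℝ, 0 < η ∧ c₂ = c + 2*η :=
    ⟨(c₂ - c)/2, by linarith, by ring⟩
  have hev : ∀ᶠ p in (𝓝[>] (0:ℝ)) ×ˢ 𝓝 w,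
      (c₂ : EReal) < (((p.1)⁻¹ : ℝ) : EReal) * (f (xb + p.1 • p.2) - f xb) :=
    Filter.eventually_lt_of_lt_liminf (by simpa [subderiv] using hc2) (by isBoundedDefault)
  rw [Filter.eventually_prod_iff] at hev
  obtain ⟨pa, hpa, pb, hpb, himp⟩ := hev
  rw [eventually_nhdsWithin_iff, Metric.eventually_nhds_iff] at hpa
  obtain ⟨τ, hτ, hτ'⟩ := hpa
  rw [Metric.eventually_nhds_iff] at hpb
  obtain ⟨θ, hθ, hθ'⟩ := hpb
  have hgrow : ∀ t' : ℝ, 0 < t' → t' < τ → ∀ w' : EuclideanSpace ℝ (Fin n), ‖w' - w‖ < θ →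
      ((a + t'*c₂ : ℝ) : EReal) ≤ f (xb + t' • w') := by
    intro t' ht' htτ w' hw'
    have h1 : pa t' := hτ' (by rw [Real.dist_eq, sub_zero, abs_of_pos ht']; exact htτ) ht'
    have h2 : pb w' := hθ' (by rwa [dist_eq_norm])
    have h3 := himp h1 h2
    by_cases htop : f (xb + t' • w') = ⊤
    · rw [htop]; exact le_top
    obtain ⟨bv, hbv⟩ : ∃ bv : ℝ, f (xb + t' • w') = (bv : EReal) :=
      ⟨(f (xb + t' • w')).toReal, (EReal.coe_toReal htop (hbot _)).symm⟩
    rw [hbv] at h3 ⊢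
    rw [ha, ← EReal.coe_sub, ← EReal.coe_mul, EReal.coe_lt_coe_iff] at h3
    rw [EReal.coe_le_coe_iff]
    have h4 := mul_lt_mul_of_pos_left h3 ht'
    have h5 : t' * (t'⁻¹ * (bv - a)) = bv - a := by
      field_simp
    rw [h5] at h4
    linarith
  obtain ⟨ε', hε', hε'lt⟩ : ∃ x : ℝ, 0 < x ∧ x < ε := ⟨ε/2, by linarith, by linarith⟩
  obtain ⟨θ₀, hθ₀, hθ₀θ, hθ₀g⟩ :
      ∃ x : ℝ, 0 < x ∧ x < θ ∧ ‖g₀‖ * x ≤ η := by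
    refine ⟨min (θ/2) (η/(‖g₀‖+1)), lt_min (by linarith) (by positivity),
      lt_of_le_of_lt (min_le_left _ _) (by linarith), ?_⟩
    have h1 : min (θ/2) (η/(‖g₀‖+1)) ≤ η/(‖g₀‖+1) := min_le_right _ _
    have h2 : ‖g₀‖ * min (θ/2) (η/(‖g₀‖+1)) ≤ ‖g₀‖ * (η/(‖g₀‖+1)) :=
      mul_le_mul_of_nonneg_left h1 (norm_nonneg _)
    have h3 : ‖g₀‖ * (η/(‖g₀‖+1)) ≤ η := by
      rw [mul_comm, div_mul_eq_mul_div, div_le_iff₀ (by positivity)]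
      nlinarith [norm_nonneg g₀, hη.le]
    linarith
  obtain ⟨κ, hκ1, hκA', hκB'⟩ :
      ∃ x : ℝ, 1 ≤ x ∧ 4*‖w‖^2+1 ≤ x * (ε'*θ₀) ∧ ‖w‖^2+1 ≤ x * η := by
    refine ⟨max 1 (max ((4*‖w‖^2+1)/(ε'*θ₀)) ((‖w‖^2+1)/η)), le_max_left _ _, ?_, ?_⟩
    · have h1 : (4*‖w‖^2+1)/(ε'*θ₀) ≤ max 1 (max ((4*‖w‖^2+1)/(ε'*θ₀)) ((‖w‖^2+1)/η)) :=
        le_trans (le_max_left _ _) (le_max_right _ _)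
      rw [div_le_iff₀ (by positivity)] at h1
      linarith
    · have h1 : (‖w‖^2+1)/η ≤ max 1 (max ((4*‖w‖^2+1)/(ε'*θ₀)) ((‖w‖^2+1)/η)) :=
        le_trans (le_max_right _ _) (le_max_right _ _)
      rw [div_le_iff₀ hη] at h1
      linarith
  have hκ0 : (0:ℝ) < κ := lt_of_lt_of_le one_pos hκ1
  have hρw : (0:ℝ) < 36*ρ*‖w‖^2+1 := by
    have := mul_nonneg (mul_nonneg (by norm_num : (0:ℝ) ≤ 36) hρ) (sq_nonneg ‖w‖)
    nlinarith
  have h4κρ : (0:ℝ) < 4*κ*(ρ+1) := by nlinarith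
  obtain ⟨T, hT, hT1, hTτ, hTκ, hTeb, hTρ⟩ :
      ∃ x : ℝ, 0 < x ∧ x ≤ 1 ∧ x ≤ τ/2 ∧ x ≤ 1/(4*κ*(ρ+1)) ∧ x ≤ eb/(3*‖w‖+2) ∧
        x ≤ ε'*θ₀/(36*ρ*‖w‖^2+1) := by
    refine ⟨min 1 (min (τ/2) (min (1/(4*κ*(ρ+1))) (min (eb/(3*‖w‖+2))
      (ε'*θ₀/(36*ρ*‖w‖^2+1))))), ?_, min_le_left _ _,
      le_trans (min_le_right _ _) (min_le_left _ _),
      le_trans (min_le_right _ _) (le_trans (min_le_right _ _) (min_le_left _ _)),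
      le_trans (min_le_right _ _) (le_trans (min_le_right _ _)
        (le_trans (min_le_right _ _) (min_le_left _ _))),
      le_trans (min_le_right _ _) (le_trans (min_le_right _ _)
        (le_trans (min_le_right _ _) (min_le_right _ _)))⟩
    refine lt_min one_pos (lt_min (by linarith) (lt_min (div_pos one_pos h4κρ)
      (lt_min (div_pos heb (by positivity)) (div_pos (mul_pos hε' hθ₀) hρw))))
  obtain ⟨tf, htf_def⟩ : ∃ tf : ℕ → ℝ, tf = fun j : ℕ => T/((j:ℝ)+1) := ⟨_, rfl⟩
  have htf0 : ∀ j, 0 < tf j := by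
    intro j
    rw [htf_def]
    exact div_pos hT (by positivity)
  have htfT : ∀ j, tf j ≤ T := by
    intro j
    rw [htf_def]
    apply div_le_self hT.le
    have : (0:ℝ) ≤ (j:ℝ) := Nat.cast_nonneg j
    linarith
  have htk : ∀ j, 4 * κ * (ρ + 1) * tf j ≤ 1 := by
    intro j
    have h1 : tf j ≤ 1/(4*κ*(ρ+1)) := le_trans (htfT j) hTκ
    rw [le_div_iff₀ h4κρ] at h1
    linarith
  have hteb : ∀ j, 3 * tf j * ‖w‖ < eb := by
    intro j
    have h1 : tf j ≤ eb/(3*‖w‖+2) := le_trans (htfT j) hTeb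
    rw [le_div_iff₀ (by positivity)] at h1
    nlinarith [htf0 j]
  have hstep := fun j => aux_step hbot hlsc ha heb hρ (hA g₀ hg₀S) w hκ1 (htf0 j)
    (htk j) (hteb j)
  choose y b hfy hD h3 hmain hfs using hstep
  obtain ⟨gv, hgv_def⟩ : ∃ gv : ℕ → EuclideanSpace ℝ (Fin n),
      gv = fun j => g₀ + (κ * tf j)⁻¹ • ((tf j) • w - (y j - xb)) := ⟨_, rfl⟩
  have hκt : ∀ j, (0:ℝ) < κ * tf j := fun j => mul_pos hκ0 (htf0 j)
  have hgvnorm : ∀ j, ‖gv j - g₀‖ ≤ 2*‖w‖/κ := by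
    intro j
    have h1 : gv j - g₀ = (κ * tf j)⁻¹ • ((tf j) • w - (y j - xb)) := by
      simp only [hgv_def]
      abel
    rw [h1, norm_smul, Real.norm_eq_abs, abs_of_pos (inv_pos.2 (hκt j))]
    have h2 : ‖(tf j) • w - (y j - xb)‖ ≤ 2 * tf j * ‖w‖ := by
      rw [← norm_neg]
      have heq : -((tf j) • w - (y j - xb)) = y j - xb - (tf j) • w := by abel
      rw [heq]
      exact hD j
    have h4 : (κ * tf j)⁻¹ * (2 * tf j * ‖w‖) = 2*‖w‖/κ := by
      field_simp [(htf0 j).ne', hκ0.ne']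
    calc (κ * tf j)⁻¹ * ‖(tf j) • w - (y j - xb)‖
        ≤ (κ * tf j)⁻¹ * (2 * tf j * ‖w‖) :=
          mul_le_mul_of_nonneg_left h2 (inv_pos.2 (hκt j)).le
      _ = 2*‖w‖/κ := h4
  have hgvball : ∀ j, gv j ∈ Metric.closedBall g₀ (2*‖w‖/κ) := by
    intro j
    rw [Metric.mem_closedBall, dist_eq_norm]
    exact hgvnorm j
  obtain ⟨gs, hgsball, σ, hσ, hgconv⟩ :=
    (isCompact_closedBall g₀ (2*‖w‖/κ)).tendsto_subseq hgvball
  have hσtop : Tendsto σ atTop atTop := hσ.tendsto_atTop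
  have htf_tend : Tendsto (fun j => tf (σ j)) atTop (𝓝 0) := by
    have h1 : Tendsto (fun j : ℕ => T * (1/((j:ℝ)+1))) atTop (𝓝 (T * 0)) :=
      tendsto_one_div_add_atTop_nhds_zero_nat.const_mul T
    have h2 : Tendsto tf atTop (𝓝 0) := by
      have heq : (fun j : ℕ => T * (1/((j:ℝ)+1))) = tf := by
        funext j
        rw [htf_def]
        ring
      rw [heq, mul_zero] at h1
      exact h1
    exact h2.comp hσtop
  have hy_tend : Tendsto (fun j => y (σ j)) atTop (𝓝 xb) := by
    rw [← tendsto_sub_nhds_zero_iff]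
    refine squeeze_zero_norm (fun j => h3 (σ j)) ?_
    have h5 : Tendsto (fun j => 3 * tf (σ j) * ‖w‖) atTop (𝓝 (3 * 0 * ‖w‖)) :=
      (htf_tend.const_mul 3).mul_const ‖w‖
    simpa using h5
  have hyeb : ∀ j, ‖y j - xb‖ ≤ eb :=
    fun j => le_trans (h3 j) (by nlinarith [hteb j, htf0 j])
  have hb_bound : ∀ j, |b j - a| ≤ (3*‖g₀‖*‖w‖ + ‖w‖^2 + 5*ρ*‖w‖^2) * tf j := by
    intro j
    have hlowj : a + ⟪g₀, y j - xb⟫ - ρ/2 * ‖y j - xb‖^2 ≤ b j := by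
      have h1 := hA g₀ hg₀S (y j) (hyeb j)
      rw [hfy j] at h1
      exact_mod_cast h1
    have hin : |⟪g₀, y j - xb⟫| ≤ ‖g₀‖ * (3 * tf j * ‖w‖) :=
      le_trans (abs_real_inner_le_norm g₀ _) (mul_le_mul_of_nonneg_left (h3 j) (norm_nonneg _))
    have hub : b j ≤ a + ⟪g₀, y j - xb⟫ + tf j * ‖w‖^2 := by
      have h1 := hmain j
      have h2 : (0:ℝ) ≤ ‖y j - xb - (tf j) • w‖^2 / (2*κ*(tf j)) :=
        div_nonneg (sq_nonneg _) (by nlinarith [hκt j])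
      have h3' : tf j * ‖w‖^2/(2*κ) ≤ tf j * ‖w‖^2 := by
        rw [div_le_iff₀ (by linarith)]
        have e1 := mul_le_mul_of_nonneg_left (by linarith : (1:ℝ) ≤ 2*κ)
          (mul_nonneg (htf0 j).le (sq_nonneg ‖w‖))
        nlinarith [e1]
      linarith
    have hlb : a - (3*‖g₀‖*‖w‖ + 5*ρ*‖w‖^2) * tf j ≤ b j := by
      have hd2 : ‖y j - xb‖^2 ≤ 9 * (tf j)^2 * ‖w‖^2 := by
        have h6 := h3 j
        nlinarith [norm_nonneg (y j - xb), htf0 j]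
      have htle : tf j ≤ 1 := le_trans (htfT j) hT1
      have h5 : ρ/2 * ‖y j - xb‖^2 ≤ 5*ρ*‖w‖^2 * tf j := by
        have e1 : ρ/2 * ‖y j - xb‖^2 ≤ ρ/2 * (9*(tf j)^2*‖w‖^2) :=
          mul_le_mul_of_nonneg_left hd2 (by linarith)
        have e2 : (tf j)^2 ≤ tf j := by nlinarith [htf0 j, htle]
        have e3 : ρ*‖w‖^2*(tf j)^2 ≤ ρ*‖w‖^2*(tf j) :=
          mul_le_mul_of_nonneg_left e2 (mul_nonneg hρ (sq_nonneg ‖w‖))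
        nlinarith [e1, e3]
      have h6 := abs_le.mp hin
      linarith
    rw [abs_le]
    have h6 := abs_le.mp hin
    have e4 : (0:ℝ) ≤ ‖w‖^2 * tf j := mul_nonneg (sq_nonneg ‖w‖) (htf0 j).le
    have e5 : (0:ℝ) ≤ 5*ρ*‖w‖^2 * tf j :=
      mul_nonneg (mul_nonneg (mul_nonneg (by norm_num) hρ) (sq_nonneg ‖w‖)) (htf0 j).le
    constructor
    · nlinarith [hlb, e4]
    · nlinarith [hub, h6.2, e5]
  have hb_tend : Tendsto (fun j => b (σ j)) atTop (𝓝 a) := by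
    have h1 : Tendsto (fun j => b (σ j) - a) atTop (𝓝 0) := by
      refine squeeze_zero_norm (fun j => hb_bound (σ j)) ?_
      have h2 := htf_tend.const_mul (3*‖g₀‖*‖w‖ + ‖w‖^2 + 5*ρ*‖w‖^2)
      simpa using h2
    have h2 := h1.add_const a
    simpa using h2
  have hgsS : gs ∈ limSubdiff f xb := by
    refine ⟨fun j => y (σ j), fun j => gv (σ j), hy_tend, ?_, fun j => ?_, hgconv⟩
    · rw [ha]
      have heq : (fun j => f (y (σ j))) = fun j => ((b (σ j) : ℝ) : EReal) := by
        funext j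
        exact hfy (σ j)
      rw [heq]
      exact EReal.tendsto_coe.mpr hb_tend
    · simp only [hgv_def]
      exact hfs (σ j)
  have hgsV : gs - g₀ ∈ V := by
    have h1 : gs - gt ∈ V := by
      rw [hV]
      exact Submodule.subset_span ⟨gs, hgsS, rfl⟩
    have h2 : g₀ - gt ∈ V := by
      rw [hV]
      exact Submodule.subset_span ⟨g₀, hg₀S, rfl⟩
    have h3' : gs - g₀ = (gs - gt) - (g₀ - gt) := by abel
    rw [h3']
    exact Submodule.sub_mem V h1 h2
  have hQcont : Continuous (fun x : EuclideanSpace ℝ (Fin n) =>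
      x - ((V.orthogonalProjectionOnto x : EuclideanSpace ℝ (Fin n)))) :=
    continuous_id.sub (continuous_subtype_val.comp (V.orthogonalProjectionOnto).continuous)
  have hQgs : gs - g₀ - ((V.orthogonalProjectionOnto (gs - g₀) : EuclideanSpace ℝ (Fin n))) = 0 := by
    rw [← Submodule.starProjection_apply, Submodule.starProjection_eq_self_iff.mpr hgsV]
    exact sub_self _
  have hQconv : Tendsto (fun j => ‖gv (σ j) - g₀ -
      ((V.orthogonalProjectionOnto (gv (σ j) - g₀) : EuclideanSpace ℝ (Fin n)))‖) atTop (𝓝 0) := by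
    have h1 : Tendsto (fun j => gv (σ j) - g₀) atTop (𝓝 (gs - g₀)) := hgconv.sub_const g₀
    have h2 := ((hQcont.tendsto (gs - g₀)).comp h1)
    rw [hQgs] at h2
    simpa using h2.norm
  have hevQ : ∀ᶠ j in atTop, ‖gv (σ j) - g₀ -
      ((V.orthogonalProjectionOnto (gv (σ j) - g₀) : EuclideanSpace ℝ (Fin n)))‖ < θ₀/(2*κ) :=
    hQconv.eventually_lt_const (div_pos hθ₀ (by linarith))
  obtain ⟨j, hjQ⟩ := hevQ.exists
  -- fix j ; notation
  obtain ⟨t, ht_def⟩ : ∃ t : ℝ, t = tf (σ j) := ⟨_, rfl⟩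
  have ht0 : 0 < t := ht_def ▸ htf0 (σ j)
  have htT : t ≤ T := ht_def ▸ htfT (σ j)
  obtain ⟨d, hd_def⟩ : ∃ d : EuclideanSpace ℝ (Fin n), d = y (σ j) - xb := ⟨_, rfl⟩
  obtain ⟨q, hq_def⟩ : ∃ q : EuclideanSpace ℝ (Fin n), q = d - t • w := ⟨_, rfl⟩
  have hκt' : (0:ℝ) < κ * t := mul_pos hκ0 ht0
  have hPw0 : V.orthogonalProjectionOnto w = 0 :=
    Submodule.orthogonalProjectionOnto_apply_of_mem_orthogonal hw
  have hgvj : gv (σ j) - g₀ = (κ * t)⁻¹ • (t • w - d) := by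
    simp only [hgv_def, hd_def, ht_def]
    abel
  have hQq : ‖q - ((V.orthogonalProjectionOnto q : EuclideanSpace ℝ (Fin n)))‖ < θ₀ * t / 2 := by
    have h2 : gv (σ j) - g₀ - ((V.orthogonalProjectionOnto (gv (σ j) - g₀) : EuclideanSpace ℝ (Fin n)))
        = (κ * t)⁻¹ • ((t • w - d) -
          ((V.orthogonalProjectionOnto (t • w - d) : EuclideanSpace ℝ (Fin n)))) := by
      rw [hgvj, map_smul]
      push_cast
      module
    have h3' : ‖gv (σ j) - g₀ -
        ((V.orthogonalProjectionOnto (gv (σ j) - g₀) : EuclideanSpace ℝ (Fin n)))‖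
        = (κ * t)⁻¹ * ‖(t • w - d) -
          ((V.orthogonalProjectionOnto (t • w - d) : EuclideanSpace ℝ (Fin n)))‖ := by
      rw [h2, norm_smul, Real.norm_eq_abs, abs_of_pos (inv_pos.2 hκt')]
    have h4 : ‖(t • w - d) - ((V.orthogonalProjectionOnto (t • w - d) :
        EuclideanSpace ℝ (Fin n)))‖ < (κ*t) * (θ₀/(2*κ)) := by
      have h5 := hjQ
      rw [h3'] at h5
      have h6 : (κ*t) * ((κ * t)⁻¹ * ‖(t • w - d) - ((V.orthogonalProjectionOnto (t • w - d) :
          EuclideanSpace ℝ (Fin n)))‖) < (κ*t) * (θ₀/(2*κ)) :=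
        mul_lt_mul_of_pos_left h5 hκt'
      have h7 : (κ*t) * ((κ * t)⁻¹ * ‖(t • w - d) - ((V.orthogonalProjectionOnto (t • w - d) :
          EuclideanSpace ℝ (Fin n)))‖) = ‖(t • w - d) - ((V.orthogonalProjectionOnto (t • w - d) :
          EuclideanSpace ℝ (Fin n)))‖ := by
        field_simp
      rwa [h7] at h6
    have h5 : (κ*t) * (θ₀/(2*κ)) = θ₀ * t / 2 := by
      field_simp [hκ0.ne']
    have h6 : q - ((V.orthogonalProjectionOnto q : EuclideanSpace ℝ (Fin n)))
        = -((t • w - d) - ((V.orthogonalProjectionOnto (t • w - d) :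
          EuclideanSpace ℝ (Fin n)))) := by
      have hqe : q = -(t • w - d) := by rw [hq_def]; abel
      rw [hqe, map_neg]
      push_cast
      abel
    rw [h6, norm_neg]
    linarith
  have hyj : y (σ j) = xb + d := by rw [hd_def]; abel
  have hdeb : ‖d‖ ≤ 3*t*‖w‖ := by
    rw [hd_def, ht_def]
    exact h3 (σ j)
  have hupper : b (σ j) ≤ a + ⟪g₀, d⟫ + t * ‖w‖^2/(2*κ) := by
    have h1 := hmain (σ j)
    rw [← hd_def, ← ht_def] at h1
    have h2 : (0:ℝ) ≤ ‖d - t • w‖^2 / (2*κ*t) :=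
      div_nonneg (sq_nonneg _) (by nlinarith [hκt'])
    linarith
  rcases le_or_gt (θ₀*t/2) ‖((V.orthogonalProjectionOnto d : EuclideanSpace ℝ (Fin n)))‖ with hPd | hPd
  · -- Branch 1: big V-component
    have hθ₀t : (0:ℝ) < θ₀*t/2 := by nlinarith [mul_pos hθ₀ ht0]
    have hPdpos : (0:ℝ) < ‖((V.orthogonalProjectionOnto d : EuclideanSpace ℝ (Fin n)))‖ :=
      lt_of_lt_of_le hθ₀t hPd
    obtain ⟨v, hv_def⟩ : ∃ v : EuclideanSpace ℝ (Fin n),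
        v = (ε'/‖((V.orthogonalProjectionOnto d : EuclideanSpace ℝ (Fin n)))‖) •
          ((V.orthogonalProjectionOnto d : EuclideanSpace ℝ (Fin n))) := ⟨_, rfl⟩
    have hvV : v ∈ V := hv_def ▸ Submodule.smul_mem V _ (SetLike.coe_mem _)
    have hvnorm : ‖v‖ = ε' := by
      rw [hv_def, norm_smul, Real.norm_eq_abs, abs_of_pos (div_pos hε' hPdpos)]
      field_simp
    have hvS : g₀ + v ∈ limSubdiff f xb := hg₀ v hvV (by rw [hvnorm]; exact hε'lt)
    have hlowv : a + ⟪g₀ + v, d⟫ - ρ/2 * ‖d‖^2 ≤ b (σ j) := by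
      have h1 := hA _ hvS (y (σ j)) (hyeb (σ j))
      rw [hfy (σ j)] at h1
      have h2 := EReal.coe_le_coe_iff.mp h1
      rw [← hd_def] at h2
      exact h2
    have hvd : ⟪v, d⟫ = ε' * ‖((V.orthogonalProjectionOnto d : EuclideanSpace ℝ (Fin n)))‖ := by
      rw [hv_def, real_inner_smul_left]
      have hdec : ⟪((V.orthogonalProjectionOnto d : EuclideanSpace ℝ (Fin n))), d⟫
          = ‖((V.orthogonalProjectionOnto d : EuclideanSpace ℝ (Fin n)))‖^2 := by
        have h2 : ⟪((V.orthogonalProjectionOnto d : EuclideanSpace ℝ (Fin n))),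
            d - ((V.orthogonalProjectionOnto d : EuclideanSpace ℝ (Fin n)))⟫ = 0 :=
          (Submodule.mem_orthogonal V _).mp
            (Submodule.sub_starProjection_mem_orthogonal (K := V) d) _ (SetLike.coe_mem _)
        have h1 : ⟪((V.orthogonalProjectionOnto d : EuclideanSpace ℝ (Fin n))), d⟫
            = ⟪((V.orthogonalProjectionOnto d : EuclideanSpace ℝ (Fin n))),
                d - ((V.orthogonalProjectionOnto d : EuclideanSpace ℝ (Fin n)))⟫
              + ⟪((V.orthogonalProjectionOnto d : EuclideanSpace ℝ (Fin n))),
                ((V.orthogonalProjectionOnto d : EuclideanSpace ℝ (Fin n)))⟫ := by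
          rw [inner_sub_right]
          ring
        rw [h1, h2, real_inner_self_eq_norm_sq]
        ring
      rw [hdec]
      field_simp
    have hsplit : ⟪g₀ + v, d⟫ = ⟪g₀, d⟫ + ⟪v, d⟫ := inner_add_left _ _ _
    have hkey : ε' * (θ₀*t/2) ≤ t * ‖w‖^2/(2*κ) + ρ/2 * ‖d‖^2 := by
      have h1 : ε' * (θ₀*t/2) ≤ ε' * ‖((V.orthogonalProjectionOnto d : EuclideanSpace ℝ (Fin n)))‖ :=
        mul_le_mul_of_nonneg_left hPd hε'.le
      linarith [hlowv, hupper, hsplit, hvd, h1]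
    have he2 : t * ‖w‖^2/(2*κ) ≤ t * (ε'*θ₀/8) := by
      rw [div_le_iff₀ (by linarith)]
      have e := mul_le_mul_of_nonneg_left hκA' ht0.le
      nlinarith [e, ht0.le]
    have hd9 : ‖d‖^2 ≤ 9*t^2*‖w‖^2 := by
      have e := pow_le_pow_left₀ (norm_nonneg d) hdeb 2
      have e2 : (3*t*‖w‖)^2 = 9*t^2*‖w‖^2 := by ring
      linarith [e, e2.le, e2.ge]
    have hTt : t * (36*ρ*‖w‖^2+1) ≤ ε'*θ₀ := by
      have h1 : t ≤ ε'*θ₀/(36*ρ*‖w‖^2+1) := le_trans htT hTρ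
      rw [le_div_iff₀ hρw] at h1
      linarith
    have he3 : ρ/2 * ‖d‖^2 ≤ t * (ε'*θ₀/8) := by
      have e1 := mul_le_mul_of_nonneg_left hd9 (by linarith : (0:ℝ) ≤ ρ/2)
      have e2 := mul_le_mul_of_nonneg_left hTt (by linarith [ht0.le] : (0:ℝ) ≤ t/8)
      nlinarith [e1, e2, sq_nonneg t]
    linarith [mul_pos (mul_pos hε' hθ₀) ht0, hkey, he2, he3]
  · -- Branch 2: small V-component, minimizer in the growth tube
    have hPq : V.orthogonalProjectionOnto q = V.orthogonalProjectionOnto d := by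
      rw [hq_def, map_sub, map_smul, hPw0, smul_zero, sub_zero]
    have hq2 : ‖q‖^2 = ‖((V.orthogonalProjectionOnto q : EuclideanSpace ℝ (Fin n)))‖^2
        + ‖q - ((V.orthogonalProjectionOnto q : EuclideanSpace ℝ (Fin n)))‖^2 := by
      have hperp : ⟪((V.orthogonalProjectionOnto q : EuclideanSpace ℝ (Fin n))),
          q - ((V.orthogonalProjectionOnto q : EuclideanSpace ℝ (Fin n)))⟫ = 0 :=
        (Submodule.mem_orthogonal V _).mp
          (Submodule.sub_starProjection_mem_orthogonal (K := V) q) _ (SetLike.coe_mem _)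
      have hns := norm_add_sq_real ((V.orthogonalProjectionOnto q : EuclideanSpace ℝ (Fin n)))
        (q - ((V.orthogonalProjectionOnto q : EuclideanSpace ℝ (Fin n))))
      have he : ((V.orthogonalProjectionOnto q : EuclideanSpace ℝ (Fin n)))
          + (q - ((V.orthogonalProjectionOnto q : EuclideanSpace ℝ (Fin n)))) = q := by abel
      rw [he, hperp] at hns
      rw [hns]
      ring
    have hqlt : ‖q‖ < θ₀ * t := by
      have hQq' : ‖q - ((V.orthogonalProjectionOnto q : EuclideanSpace ℝ (Fin n)))‖ < θ₀*t/2 := hQq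
      have h1 : ‖q‖^2 < (θ₀*t/2)^2 + (θ₀*t/2)^2 := by
        have hPqc : ((V.orthogonalProjectionOnto q : EuclideanSpace ℝ (Fin n)))
            = ((V.orthogonalProjectionOnto d : EuclideanSpace ℝ (Fin n))) := by rw [hPq]
        have hPdn : ‖((V.orthogonalProjectionOnto q : EuclideanSpace ℝ (Fin n)))‖ < θ₀*t/2 := by
          rw [hPqc]; exact hPd
        have a1 : ‖((V.orthogonalProjectionOnto q : EuclideanSpace ℝ (Fin n)))‖^2
            < (θ₀*t/2)^2 := by
          nlinarith [hPdn, norm_nonneg ((V.orthogonalProjectionOnto q : EuclideanSpace ℝ (Fin n)))]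
        have a2 : ‖q - ((V.orthogonalProjectionOnto q : EuclideanSpace ℝ (Fin n)))‖^2
            < (θ₀*t/2)^2 := by
          nlinarith [hQq', norm_nonneg (q - ((V.orthogonalProjectionOnto q :
            EuclideanSpace ℝ (Fin n))))]
        rw [hq2]
        linarith [a1, a2]
      nlinarith [norm_nonneg q, mul_pos hθ₀ ht0, h1, sq_nonneg (‖q‖ - θ₀*t),
        sq_nonneg (‖q‖ + θ₀*t)]
    have htτ : t < τ := by linarith [le_trans htT hTτ]
    have hw'w : ‖t⁻¹ • d - w‖ < θ := by
      have h1 : t⁻¹ • d - w = t⁻¹ • q := by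
        rw [hq_def, smul_sub, smul_smul, inv_mul_cancel₀ ht0.ne', one_smul]
      rw [h1, norm_smul, Real.norm_eq_abs, abs_of_pos (inv_pos.2 ht0)]
      have h2 : t⁻¹ * ‖q‖ < t⁻¹ * (θ₀ * t) := mul_lt_mul_of_pos_left hqlt (inv_pos.2 ht0)
      have h3' : t⁻¹ * (θ₀ * t) = θ₀ := by field_simp [ht0.ne']
      linarith [hθ₀θ]
    have hgrowj := hgrow t ht0 htτ (t⁻¹ • d) hw'w
    have hyis : xb + t • (t⁻¹ • d) = y (σ j) := by
      rw [smul_smul, mul_inv_cancel₀ ht0.ne', one_smul, hyj]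
    rw [hyis, hfy (σ j)] at hgrowj
    have hblow : a + t*c₂ ≤ b (σ j) := EReal.coe_le_coe_iff.mp hgrowj
    have hdi : ⟪g₀, d⟫ = ⟪g₀, q⟫ + t * c := by
      have h1 : d = q + t • w := by rw [hq_def]; abel
      rw [h1, inner_add_right, real_inner_smul_right, hc_def]
    have hqg : |⟪g₀, q⟫| ≤ ‖g₀‖ * (θ₀ * t) :=
      le_trans (abs_real_inner_le_norm g₀ q) (mul_le_mul_of_nonneg_left hqlt.le (norm_nonneg _))
    have hg₀q : ⟪g₀, q⟫ ≤ η * t := by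
      have h1 := (abs_le.mp hqg).2
      have h2 := mul_le_mul_of_nonneg_right hθ₀g ht0.le
      nlinarith [h1, h2]
    have hwκ : t * ‖w‖^2/(2*κ) ≤ η*t/2 := by
      rw [div_le_iff₀ (by linarith)]
      have e := mul_le_mul_of_nonneg_left hκB' ht0.le
      nlinarith [e, ht0.le]
    rw [hc₂] at hblow
    nlinarith [mul_pos ht0 hη, hblow, hupper, hdi, hg₀q, hwκ]

end AuxProofs

/-- With the UV-decomposition, under Assumption A1: for every `g₀` in the `ε`-relative
interior of `∂f(xb)`, the set of `w` orthogonal to `∂f(xb) - g₀` is the normal cone to the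
convex set `∂f(xb)` at `g₀`; these normal cones coincide for any two such `g₀`; and
`U = U' = N_[∂f(xb)](g₀)`, where `U'` is the set of `w` with `df(xb)(-w) = -df(xb)(w)`. -/
theorem U_space_characterization {n : ℕ} (f : EuclideanSpace ℝ (Fin n) → EReal) (xb : EuclideanSpace ℝ (Fin n)) (eb ρ ε : ℝ) (hε : 0 < ε)
    (hA1 : AssumptionA1 f xb eb ρ) (gt : EuclideanSpace ℝ (Fin n)) (hgt : gt ∈ limSubdiff f xb)
    (V : Submodule ℝ (EuclideanSpace ℝ (Fin n)))
    (hV : V = Submodule.span ℝ ((fun g => g - gt) '' limSubdiff f xb))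
    (hne : (DEps f xb V ε).Nonempty) :
    (∀ g₀ ∈ DEps f xb V ε,
      {w : EuclideanSpace ℝ (Fin n) | ∀ g ∈ limSubdiff f xb, ⟪g - g₀, w⟫ = 0} =
        convexNormalCone (limSubdiff f xb) g₀) ∧
    (∀ g₁ ∈ DEps f xb V ε, ∀ g₂ ∈ DEps f xb V ε,
      convexNormalCone (limSubdiff f xb) g₁ = convexNormalCone (limSubdiff f xb) g₂) ∧
    (∀ g₀ ∈ DEps f xb V ε,
      ((Vᗮ : Set (EuclideanSpace ℝ (Fin n))) = {w : EuclideanSpace ℝ (Fin n) | subderiv f xb (-w) = - subderiv f xb w} ∧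
       (Vᗮ : Set (EuclideanSpace ℝ (Fin n))) = convexNormalCone (limSubdiff f xb) g₀)) := by
  obtain ⟨a, ha, heb, hρ, hA⟩ := aux_bound hA1 hgt
  obtain ⟨hbot, -, hlsc, -⟩ := hA1
  have hDS : ∀ g₀ ∈ DEps f xb V ε, g₀ ∈ limSubdiff f xb := by
    intro g₀ hg₀
    have := hg₀ 0 V.zero_mem (by simpa using hε)
    simpa using this
  have hsubV : ∀ g ∈ limSubdiff f xb, ∀ g' ∈ limSubdiff f xb, g - g' ∈ V := by
    intro g hg g' hg'
    have h1 : g - gt ∈ V := hV ▸ Submodule.subset_span ⟨g, hg, rfl⟩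
    have h2 : g' - gt ∈ V := hV ▸ Submodule.subset_span ⟨g', hg', rfl⟩
    have h3 : g - g' = (g - gt) - (g' - gt) := by abel
    rw [h3]
    exact Submodule.sub_mem V h1 h2
  have hVperp : ∀ g₀ ∈ DEps f xb V ε, ∀ w : EuclideanSpace ℝ (Fin n),
      (∀ g ∈ limSubdiff f xb, ⟪g - g₀, w⟫ = 0) → w ∈ Vᗮ := by
    intro g₀ hg₀ w hw
    rw [Submodule.mem_orthogonal]
    intro u hu
    rw [hV] at hu
    induction hu using Submodule.span_induction with
    | mem x hx =>
        obtain ⟨g, hg, rfl⟩ := hx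
        have e1 := hw g hg
        have e2 := hw gt hgt
        have h3 : (fun g => g - gt) g = (g - g₀) - (gt - g₀) := by
          simp only []
          abel
        rw [h3, inner_sub_left, e1, e2]
        ring
    | zero => simp
    | add x y hx hy ihx ihy => rw [inner_add_left, ihx, ihy]; ring
    | smul r x hx ih => rw [real_inner_smul_left, ih]; ring
  have hVperp' : ∀ w ∈ Vᗮ, ∀ g ∈ limSubdiff f xb, ∀ g' ∈ limSubdiff f xb,
      ⟪g - g', w⟫ = 0 := by
    intro w hw g hg g' hg'
    exact (Submodule.mem_orthogonal V w).mp hw _ (hsubV g hg g' hg')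
  have hNC : ∀ g₀ ∈ DEps f xb V ε,
      convexNormalCone (limSubdiff f xb) g₀ = (Vᗮ : Set (EuclideanSpace ℝ (Fin n))) := by
    intro g₀ hg₀
    ext w
    constructor
    · intro hwNC
      have hsmall : ∀ v ∈ V, ‖v‖ < ε → ⟪w, v⟫ = 0 := by
        intro v hv hvn
        have h1 : ⟪w, (g₀ + v) - g₀⟫ ≤ 0 := hwNC _ (hg₀ v hv hvn)
        have h2 : ⟪w, (g₀ + -v) - g₀⟫ ≤ 0 :=
          hwNC _ (hg₀ (-v) (V.neg_mem hv) (by simpa using hvn))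
        have e1 : (g₀ + v) - g₀ = v := by abel
        have e2 : (g₀ + -v) - g₀ = -v := by abel
        rw [e1] at h1
        rw [e2, inner_neg_right] at h2
        linarith
      have hzero : ∀ v ∈ V, ⟪v, w⟫ = 0 := by
        intro v hv
        by_cases hv0 : v = 0
        · simp [hv0]
        · have hnorm : 0 < ‖v‖ := norm_pos_iff.mpr hv0
          have hpos : 0 < ε/(2*‖v‖) := by positivity
          have hnε : ‖(ε/(2*‖v‖)) • v‖ < ε := by
            rw [norm_smul, Real.norm_eq_abs, abs_of_pos hpos]
            rw [div_mul_eq_mul_div, mul_comm]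
            rw [div_lt_iff₀ (by positivity)]
            nlinarith
          have h1 := hsmall ((ε/(2*‖v‖)) • v) (V.smul_mem _ hv) hnε
          rw [real_inner_smul_right] at h1
          rcases mul_eq_zero.mp h1 with h | h
          · exact absurd h hpos.ne'
          · rw [real_inner_comm] at h
            exact h
      exact (Submodule.mem_orthogonal V w).mpr hzero
    · intro hwV g hgS
      have h1 := hVperp' w hwV g hgS g₀ (hDS g₀ hg₀)
      rw [real_inner_comm] at h1
      exact le_of_eq h1
  have part1 : ∀ g₀ ∈ DEps f xb V ε,
      {w : EuclideanSpace ℝ (Fin n) | ∀ g ∈ limSubdiff f xb, ⟪g - g₀, w⟫ = 0} =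
        convexNormalCone (limSubdiff f xb) g₀ := by
    intro g₀ hg₀
    rw [hNC g₀ hg₀]
    ext w
    simp only [Set.mem_setOf_eq, SetLike.mem_coe]
    constructor
    · intro hw
      exact hVperp g₀ hg₀ w hw
    · intro hw g hg
      exact hVperp' w hw g hg g₀ (hDS g₀ hg₀)
  refine ⟨part1, ?_, ?_⟩
  · intro g₁ h₁ g₂ h₂
    rw [hNC g₁ h₁, hNC g₂ h₂]
  · intro g₀ hg₀
    have hg₀S := hDS g₀ hg₀
    constructor
    · ext w
      simp only [SetLike.mem_coe, Set.mem_setOf_eq]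
      constructor
      · intro hwV
        have h1 : subderiv f xb w = ((⟪g₀, w⟫ : ℝ) : EReal) :=
          le_antisymm (aux_key hbot hlsc ha heb hρ hε hA hV hgt hg₀ hwV)
            (aux_B ha hbot heb hρ (hA g₀ hg₀S) w)
        have h2 : subderiv f xb (-w) = ((⟪g₀, -w⟫ : ℝ) : EReal) :=
          le_antisymm (aux_key hbot hlsc ha heb hρ hε hA hV hgt hg₀ (Vᗮ.neg_mem hwV))
            (aux_B ha hbot heb hρ (hA g₀ hg₀S) (-w))
        rw [h1, h2, inner_neg_right]
        exact_mod_cast EReal.coe_neg _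
      · intro hU
        apply hVperp g₀ hg₀
        intro g hg
        have hb1 : ((⟪g, w⟫ : ℝ) : EReal) ≤ subderiv f xb w :=
          aux_B ha hbot heb hρ (hA g hg) w
        have hb2 : ((⟪g, -w⟫ : ℝ) : EReal) ≤ subderiv f xb (-w) :=
          aux_B ha hbot heb hρ (hA g hg) (-w)
        have hb1' : ((⟪g₀, w⟫ : ℝ) : EReal) ≤ subderiv f xb w :=
          aux_B ha hbot heb hρ (hA g₀ hg₀S) w
        have hb2' : ((⟪g₀, -w⟫ : ℝ) : EReal) ≤ subderiv f xb (-w) :=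
          aux_B ha hbot heb hρ (hA g₀ hg₀S) (-w)
        rw [hU] at hb2 hb2'
        have hneg : ∀ u : EuclideanSpace ℝ (Fin n),
            -(((⟪u, -w⟫ : ℝ) : EReal)) = ((⟪u, w⟫ : ℝ) : EReal) := by
          intro u
          rw [inner_neg_right, ← EReal.coe_neg, neg_neg]
        have h3 : subderiv f xb w ≤ ((⟪g, w⟫ : ℝ) : EReal) := by
          have := EReal.le_neg_of_le_neg hb2
          rwa [hneg g] at this
        have h3' : subderiv f xb w ≤ ((⟪g₀, w⟫ : ℝ) : EReal) := by
          have := EReal.le_neg_of_le_neg hb2'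
          rwa [hneg g₀] at this
        have e1 : ⟪g, w⟫ ≤ ⟪g₀, w⟫ := by exact_mod_cast le_trans hb1 h3'
        have e2 : ⟪g₀, w⟫ ≤ ⟪g, w⟫ := by exact_mod_cast le_trans hb1' h3
        rw [inner_sub_left]
        linarith
    · exact (hNC g₀ hg₀).symm

end
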